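/- Started at any vertex of an i-nice n-dimensional USO, the Random Edge random walk (at each step choose an outgoing edge uniformly at random) reaches the global sink after an expected number of at most O(n^{i+1}) steps; more precisely at most n · Σ_{k=1}^{i} n^k steps in expectation. -/

import Mathlib

open Finset

/-- A directed step in the orientation given by outmap `s`:
from `v` along an outgoing coordinate `j`. -/
def USO.Step {n : ℕ} (s : Finset (Fin n) → Finset (Fin n))
    (v u : Finset (Fin n)) : Prop :=
  ∃ j, j ∈ s v ∧ u = symmDiff v {j}

/-- Reachability along directed paths. -/
def USO.Reach {n : ℕ} (s : Finset (Fin n) → Finset (Fin n)) :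
    Finset (Fin n) → Finset (Fin n) → Prop :=
  Relation.ReflTransGen (USO.Step s)

/-- Existence of a directed path of length exactly `k`. -/
def USO.StepN {n : ℕ} (s : Finset (Fin n) → Finset (Fin n)) :
    ℕ → Finset (Fin n) → Finset (Fin n) → Prop
  | 0, v, u => v = u
  | k + 1, v, u => ∃ w, USO.Step s v w ∧ USO.StepN s k w u

/-- `s` is (the outmap of) a unique sink orientation of the `n`-cube:
every face `F_{J,v} = {u : v ∆ u ⊆ J}` has a unique sink. -/
def IsUSO {n : ℕ} (s : Finset (Fin n) → Finset (Fin n)) : Prop :=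
  ∀ J v : Finset (Fin n), ∃! u, symmDiff v u ⊆ J ∧ s u ∩ J = ∅

/-- The reachmap of `v`: all coordinates outgoing at some vertex reachable from `v`. -/
def reachmap {n : ℕ} (s : Finset (Fin n) → Finset (Fin n))
    (v : Finset (Fin n)) : Set (Fin n) :=
  {j | ∃ u, USO.Reach s v u ∧ j ∈ s u}

/-- `s` is `i`-nice: every non-sink vertex has a directed path of length at most `i`
to a vertex of strictly smaller reachmap. -/
def IsNice {n : ℕ} (i : ℕ) (s : Finset (Fin n) → Finset (Fin n)) : Prop :=
  ∀ v, s v ≠ ∅ → ∃ u, (∃ k ≤ i, USO.StepN s k v u) ∧ reachmap s u ⊂ reachmap s v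

/-- Acyclicity of the orientation. -/
def IsAcyclic {n : ℕ} (s : Finset (Fin n) → Finset (Fin n)) : Prop :=
  ∀ v u, USO.Reach s v u → USO.Reach s u v → v = u

/-- geometric sum n + n^2 + ... + n^t -/
noncomputable def hgeo (n : ℕ) : ℕ → ℝ := fun t => ∑ j ∈ Finset.range t, (n : ℝ)^(j+1)

/-- decreasing-exponent partial sum n^i + n^(i-1) + ... + n^(i-k+1) -/
noncomputable def ggeo (n i : ℕ) : ℕ → ℝ := fun k => ∑ j ∈ Finset.range k, (n : ℝ)^(i-j)

lemma hgeo_nonneg (n t : ℕ) : 0 ≤ hgeo n t :=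
  Finset.sum_nonneg fun _ _ => pow_nonneg (Nat.cast_nonneg n) _

lemma ggeo_nonneg (n i k : ℕ) : 0 ≤ ggeo n i k :=
  Finset.sum_nonneg fun _ _ => pow_nonneg (Nat.cast_nonneg n) _

lemma ggeo_mono (n i : ℕ) {k k' : ℕ} (h : k ≤ k') : ggeo n i k ≤ ggeo n i k' :=
  Finset.sum_le_sum_of_subset_of_nonneg (Finset.range_subset_range.2 h)
    (fun _ _ _ => pow_nonneg (Nat.cast_nonneg n) _)

lemma hgeo_key (n t : ℕ) : (n : ℝ) * (1 + hgeo n t) = hgeo n (t+1) := by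
  have h := Finset.sum_range_succ' (fun j => (n : ℝ)^(j+1)) t
  simp only [hgeo] at *
  rw [h, mul_add, mul_one, Finset.mul_sum]
  rw [add_comm]
  congr 1
  · exact Finset.sum_congr rfl (fun j _ => by ring)
  · ring

lemma ggeo_split (n i : ℕ) : ∀ t ≤ i, ggeo n i (i - t) + hgeo n t = ggeo n i i := by
  intro t
  induction t with
  | zero => simp [hgeo]
  | succ t ih =>
    intro ht
    have h1 : t ≤ i := Nat.le_of_succ_le ht
    have h2 : i - t = (i - (t+1)) + 1 := by omega
    have h3 : i - (i - (t+1)) = t + 1 := by omega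
    have := ih h1
    rw [h2] at this
    rw [← this]
    simp only [ggeo, hgeo, Finset.sum_range_succ]
    rw [h3]
    ring

lemma ggeo_top (n i : ℕ) : ggeo n i i = hgeo n i := by
  have h := ggeo_split n i i le_rfl
  simp only [Nat.sub_self] at h
  rw [← h]
  simp [ggeo]

lemma icc_sum_eq (n i : ℕ) : ∑ k ∈ Finset.Icc 1 i, (n : ℝ) ^ k = hgeo n i := by
  induction i with
  | zero => simp [hgeo]
  | succ i ih =>
    rw [Finset.sum_Icc_succ_top (by omega : 1 ≤ i + 1), ih]
    simp [hgeo, Finset.sum_range_succ]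

lemma reachmap_step_subset {n : ℕ} {s : Finset (Fin n) → Finset (Fin n)} {v w : Finset (Fin n)}
    (h : USO.Step s v w) : reachmap s w ⊆ reachmap s v := by
  rintro j ⟨u, hr, hj⟩
  exact ⟨u, (Relation.ReflTransGen.single h).trans hr, hj⟩

lemma reachmap_sink {n : ℕ} {s : Finset (Fin n) → Finset (Fin n)} {v : Finset (Fin n)}
    (h : s v = ∅) : reachmap s v = ∅ := by
  ext j
  simp only [reachmap, Set.mem_setOf_eq, Set.mem_empty_iff_false, iff_false, not_exists]
  rintro u ⟨hr, hj⟩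
  rcases (Relation.ReflTransGen.cases_head hr) with heq | ⟨w, ⟨j', hj', _⟩, _⟩
  · subst heq; simp [h] at hj
  · simp [h] at hj'

lemma sv_subset_reachmap {n : ℕ} (s : Finset (Fin n) → Finset (Fin n)) (v : Finset (Fin n)) :
    (s v : Set (Fin n)) ⊆ reachmap s v := by
  intro j hj
  exact ⟨v, Relation.ReflTransGen.refl, by simpa using hj⟩

/-- escape distance: smallest length of a path to a strictly smaller reachmap -/
noncomputable def esc {n : ℕ} (s : Finset (Fin n) → Finset (Fin n)) (v : Finset (Fin n)) : ℕ :=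
  sInf {k | ∃ u, USO.StepN s k v u ∧ reachmap s u ⊂ reachmap s v}

set_option maxHeartbeats 1000000 in
theorem random_edge_on_nice' {n i : ℕ} (s : Finset (Fin n) → Finset (Fin n))
    (hnice : IsNice i s)
    (E : Finset (Fin n) → ℝ)
    (hE0 : ∀ v, s v = ∅ → E v = 0)
    (hErec : ∀ v, s v ≠ ∅ →
      E v = 1 + (1 / ((s v).card : ℝ)) * ∑ j ∈ s v, E (symmDiff v {j})) :
    ∀ v, E v ≤ (n : ℝ) * ∑ k ∈ Finset.Icc 1 i, (n : ℝ) ^ k := by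
  classical
  set H : ℝ := hgeo n i with hHdef
  set g : ℕ → ℝ := ggeo n i with hgdef
  have hH0 : 0 ≤ H := hgeo_nonneg n i
  have hgH : ∀ k ≤ i, g k ≤ H := fun k hk => by
    rw [hHdef, ← ggeo_top n i]; exact ggeo_mono n i hk
  -- escape facts for non-sink vertices
  have hesc : ∀ v, s v ≠ ∅ →
      (∃ u, USO.StepN s (esc s v) v u ∧ reachmap s u ⊂ reachmap s v) ∧
      esc s v ≤ i ∧ 1 ≤ esc s v := by
    intro v hv
    obtain ⟨u, ⟨k, hk, hkstep⟩, hss⟩ := hnice v hv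
    have hne : {k | ∃ u, USO.StepN s k v u ∧ reachmap s u ⊂ reachmap s v}.Nonempty :=
      ⟨k, by exact ⟨u, hkstep, hss⟩⟩
    refine ⟨Nat.sInf_mem hne, (Nat.sInf_le (by exact ⟨u, hkstep, hss⟩)).trans hk, ?_⟩
    rcases Nat.eq_zero_or_pos (esc s v) with h0 | h
    · exfalso
      have hmem := Nat.sInf_mem hne
      rw [esc] at h0
      rw [h0] at hmem
      obtain ⟨u', hu', hss'⟩ := hmem
      exact hss'.ne (by cases hu'; rfl)
    · exact h
  have main : ∀ m : ℕ, ∀ v, (reachmap s v).ncard ≤ m → E v ≤ (m : ℝ) * H := by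
    intro m
    induction m using Nat.strong_induction_on with
    | _ m IH =>
    intro v hv
    by_cases hsv : s v = ∅
    · rw [hE0 v hsv]; positivity
    obtain ⟨j0, hj0⟩ := Finset.nonempty_iff_ne_empty.2 hsv
    have hrm1 : 1 ≤ (reachmap s v).ncard := by
      rw [Nat.one_le_iff_ne_zero]
      intro h0
      have hre : reachmap s v = ∅ := (Set.ncard_eq_zero (Set.toFinite _)).1 h0
      have : (j0 : Fin n) ∈ reachmap s v := sv_subset_reachmap s v (by simpa using hj0)
      rw [hre] at this
      exact this
    obtain ⟨m', rfl⟩ : ∃ m', m = m' + 1 := ⟨m - 1, by omega⟩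
    by_cases hlt : (reachmap s v).ncard ≤ m'
    · have h1 := IH m' (by omega) v hlt
      have : (m' : ℝ) * H ≤ ((m' : ℕ) + 1 : ℝ) * H := by nlinarith
      push_cast
      push_cast at h1
      linarith
    have hvm : (reachmap s v).ncard = m' + 1 := by omega
    set A : Finset (Finset (Fin n)) :=
      Finset.univ.filter (fun w => (reachmap s w).ncard = m' + 1 ∧ s w ≠ ∅) with hAdef
    have hvA : v ∈ A := by simp [hAdef, hvm, hsv]
    obtain ⟨v0, hv0A, hv0max⟩ :=
      Finset.exists_max_image A (fun w => E w - g (esc s w)) ⟨v, hvA⟩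
    set M : ℝ := E v0 - g (esc s v0) with hMdef
    set B : Finset (Finset (Fin n)) :=
      A.filter (fun w => M ≤ E w - g (esc s w)) with hBdef
    have hv0B : v0 ∈ B := by simp [hBdef, hv0A, hMdef]
    obtain ⟨vm, hvmB, hvmmin⟩ := Finset.exists_min_image B (esc s) ⟨v0, hv0B⟩
    have hvmA : vm ∈ A := (Finset.mem_filter.1 hvmB).1
    have hvmM : M ≤ E vm - g (esc s vm) := by
      have := (Finset.mem_filter.1 hvmB).2
      simpa using this
    have hvmM' : E vm - g (esc s vm) ≤ M := hv0max vm hvmA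
    have hvmE : E vm = M + g (esc s vm) := by linarith
    have hvmcard : (reachmap s vm).ncard = m' + 1 := ((Finset.mem_filter.1 hvmA).2).1
    have hsvm : s vm ≠ ∅ := ((Finset.mem_filter.1 hvmA).2).2
    -- the key claim
    have hclaim : M ≤ (m' : ℝ) * H := by
      by_contra hM
      push_neg at hM
      obtain ⟨⟨u, hstepN, hss⟩, hdi, hd1⟩ := hesc vm hsvm
      obtain ⟨d, hd⟩ : ∃ d, esc s vm = d + 1 := ⟨esc s vm - 1, by omega⟩
      rw [hd] at hstepN hdi
      obtain ⟨w, hstepw, hwu⟩ := hstepN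
      obtain ⟨jw, hjw, hweq⟩ := hstepw
      -- bound for arbitrary neighbours
      have hnb : ∀ j ∈ s vm, E (symmDiff vm {j}) ≤ M + H := by
        intro j hj
        set w' := symmDiff vm {j} with hw'
        have hstep' : USO.Step s vm w' := ⟨j, hj, rfl⟩
        have hsub := reachmap_step_subset hstep'
        have hle : (reachmap s w').ncard ≤ m' + 1 := by
          rw [← hvmcard]; exact Set.ncard_le_ncard hsub (Set.toFinite _)
        by_cases hsmall : (reachmap s w').ncard ≤ m'
        · have := IH m' (by omega) w' hsmall
          linarith
        · have hw'card : (reachmap s w').ncard = m' + 1 := by omega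
          have hsw' : s w' ≠ ∅ := by
            intro h
            rw [reachmap_sink h] at hw'card
            simp at hw'card
          have hw'A : w' ∈ A := by simp [hAdef, hw'card, hsw']
          have h1 := hv0max w' hw'A
          have h2 : g (esc s w') ≤ H := hgH _ (hesc w' hsw').2.1
          linarith
      -- strict bound for the special neighbour
      have hnbw : E w < M + g d := by
        have hstep' : USO.Step s vm w := ⟨jw, hjw, hweq⟩
        have hsub := reachmap_step_subset hstep'
        have hle : (reachmap s w).ncard ≤ m' + 1 := by
          rw [← hvmcard]; exact Set.ncard_le_ncard hsub (Set.toFinite _)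
        by_cases hsmall : (reachmap s w).ncard ≤ m'
        · have h1 := IH m' (by omega) w hsmall
          have := ggeo_nonneg n i d
          rw [← hgdef] at this
          linarith
        · have hwcard : (reachmap s w).ncard = m' + 1 := by omega
          have hsw : s w ≠ ∅ := by
            intro h
            rw [reachmap_sink h] at hwcard
            simp at hwcard
          have hwA : w ∈ A := by simp [hAdef, hwcard, hsw]
          have hrmeq : reachmap s w = reachmap s vm :=
            Set.eq_of_subset_of_ncard_le hsub (by rw [hwcard, hvmcard]) (Set.toFinite _)
          have hdmem : d ∈ {k | ∃ u', USO.StepN s k w u' ∧ reachmap s u' ⊂ reachmap s w} :=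
            ⟨u, hwu, hrmeq ▸ hss⟩
          have hescw : esc s w ≤ d := Nat.sInf_le hdmem
          have h1 : E w - g (esc s w) ≤ M := hv0max w hwA
          have h2 : g (esc s w) ≤ g d := ggeo_mono n i hescw
          rcases lt_or_eq_of_le (show E w ≤ M + g d by linarith) with hlt | heqq
          · exact hlt
          · exfalso
            have hMw : M ≤ E w - g (esc s w) := by linarith
            have hwB : w ∈ B := by
              rw [hBdef, Finset.mem_filter]
              exact ⟨hwA, hMw⟩
            have := hvmmin w hwB
            omega
      -- the recurrence at vm
      set c : ℕ := (s vm).card with hcdef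
      have hc1 : 1 ≤ c := Finset.card_pos.2 (Finset.nonempty_iff_ne_empty.2 hsvm)
      have hcn : c ≤ n := by
        have := Finset.card_le_univ (s vm)
        simpa using this
      set cR : ℝ := (c : ℝ) with hcRdef
      have hcR1 : 1 ≤ cR := by rw [hcRdef]; exact_mod_cast hc1
      have hcRn : cR ≤ (n : ℝ) := by rw [hcRdef]; exact_mod_cast hcn
      have hcpos : 0 < cR := by linarith
      have heq := hErec vm hsvm
      have hsum : ∑ j ∈ s vm, E (symmDiff vm {j}) =
          E w + ∑ j ∈ (s vm).erase jw, E (symmDiff vm {j}) := by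
        rw [hweq]
        exact (Finset.add_sum_erase _ _ hjw).symm
      have hsum2 : ∑ j ∈ (s vm).erase jw, E (symmDiff vm {j}) ≤ (cR - 1) * (M + H) := by
        calc ∑ j ∈ (s vm).erase jw, E (symmDiff vm {j})
            ≤ ∑ _j ∈ (s vm).erase jw, (M + H) :=
              Finset.sum_le_sum (fun j hj => hnb j (Finset.mem_of_mem_erase hj))
          _ = ((c - 1 : ℕ) : ℝ) * (M + H) := by
              rw [Finset.sum_const, Finset.card_erase_of_mem hjw, nsmul_eq_mul, hcdef]
          _ = (cR - 1) * (M + H) := by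
              rw [hcRdef]
              push_cast [Nat.cast_sub hc1]
              ring
      -- the key geometric inequality
      have hkey : cR + cR * H - cR * g (d+1) ≤ H - g d := by
        have hsplit1 : g (d+1) + hgeo n (i - (d+1)) = H := by
          rw [hgdef, hHdef, ← ggeo_top n i]
          have h := ggeo_split n i (i - (d+1)) (Nat.sub_le _ _)
          rwa [show i - (i - (d+1)) = d + 1 by omega] at h
        have hsplit2 : g d + hgeo n (i - d) = H := by
          rw [hgdef, hHdef, ← ggeo_top n i]
          have h := ggeo_split n i (i - d) (Nat.sub_le _ _)
          rwa [show i - (i - d) = d by omega] at h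
        have h3 : (n : ℝ) * (1 + hgeo n (i - (d+1))) = hgeo n ((i - (d+1)) + 1) :=
          hgeo_key n _
        rw [show (i - (d+1)) + 1 = i - d by omega] at h3
        have h4 : 0 ≤ hgeo n (i - (d+1)) := hgeo_nonneg n _
        nlinarith
      -- derive the contradiction
      have hEvm : E vm = 1 + (1 / cR) * (E w + ∑ j ∈ (s vm).erase jw, E (symmDiff vm {j})) := by
        rw [heq, hsum, hcRdef, hcdef]
      have hstrict : E vm < 1 + (1 / cR) * ((M + g d) + (cR - 1) * (M + H)) := by
        rw [hEvm]
        have hlt : E w + ∑ j ∈ (s vm).erase jw, E (symmDiff vm {j}) <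
            (M + g d) + (cR - 1) * (M + H) := by linarith
        have := mul_lt_mul_of_pos_left hlt (by positivity : (0:ℝ) < 1 / cR)
        linarith
      have hfin : 1 + (1 / cR) * ((M + g d) + (cR - 1) * (M + H)) ≤ M + g (d+1) := by
        have h5 : (M + g d) + (cR - 1) * (M + H) ≤ cR * (M + g (d+1)) - cR := by nlinarith
        have h6 : (1 / cR) * (cR * (M + g (d+1)) - cR) = M + g (d+1) - 1 := by
          field_simp
        have h7 := mul_le_mul_of_nonneg_left h5 (by positivity : (0:ℝ) ≤ 1 / cR)
        linarith
      rw [hvmE, hd] at hstrict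
      linarith
    -- conclude
    have h1 := hv0max v hvA
    have h2 : g (esc s v) ≤ H := hgH _ (hesc v hsv).2.1
    push_cast
    linarith
  intro v
  rw [icc_sum_eq n i]
  have := main n v (by
    have h := Set.ncard_le_ncard (Set.subset_univ (reachmap s v)) Set.finite_univ
    simpa [Set.ncard_univ] using h)
  exact this


/-- on an i-nice n-dimensional USO, the expected number of steps
of Random Edge (given by the hitting-time equations) from any vertex is at most
n · ∑_{k=1}^{i} n^k. -/
theorem random_edge_on_nice {n i : ℕ} (s : Finset (Fin n) → Finset (Fin n))
    (hs : IsUSO s) (hnice : IsNice i s)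
    (E : Finset (Fin n) → ℝ)
    (hE0 : ∀ v, s v = ∅ → E v = 0)
    (hErec : ∀ v, s v ≠ ∅ →
      E v = 1 + (1 / ((s v).card : ℝ)) * ∑ j ∈ s v, E (symmDiff v {j})) :
    ∀ v, E v ≤ (n : ℝ) * ∑ k ∈ Finset.Icc 1 i, (n : ℝ) ^ k :=
  random_edge_on_nice' s hnice E hE0 hErec
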